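/- Let Z be a nonempty finite type and P : Z → Z → ℝ a row-stochastic matrix that is irreducible. Then for all a, b ∈ Z with a ≠ b, the total probability of eventually hitting b from a is 1: ∑_{m=1}^∞ ∑_{x ∈ S^m_{⟨a,b⟩}} Prob(x) = 1, where S^m_{⟨a,b⟩} is the set of paths x of length m with x₀ = a, x_m = b, and x_i ≠ b for all i < m. -/

import Mathlib

open scoped Classical

/-- Probability of a path `x = (x₀, …, x_m)` of length `m`:
`Prob(x) = ∏_{i=1}^m P(x_{i-1}, x_i)`. -/
def pathProb {Z : Type*} (P : Z → Z → ℝ) {m : ℕ} (x : Fin (m + 1) → Z) : ℝ :=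
  ∏ i : Fin m, P (x i.castSucc) (x i.succ)

/-- `P` is a row-stochastic matrix. -/
def RowStochastic {Z : Type*} [Fintype Z] (P : Z → Z → ℝ) : Prop :=
  (∀ a b, 0 ≤ P a b) ∧ ∀ a, ∑ b, P a b = 1

/-- The chain is irreducible: for all `a b` there is `m ≥ 1` with `(P^m)(a,b) > 0`. -/
def IsIrreducibleChain {Z : Type*} [Fintype Z] [DecidableEq Z] (P : Z → Z → ℝ) : Prop :=
  ∀ a b : Z, ∃ m : ℕ, 1 ≤ m ∧ 0 < (Matrix.of P ^ m) a b

/-- Sum of path probabilities with pinned endpoints equals a matrix power entry. -/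
lemma pathSum_pow {Z : Type*} [Fintype Z] [DecidableEq Z] (M : Matrix Z Z ℝ) :
    ∀ (n : ℕ) (a c : Z),
    ∑ x ∈ Finset.univ.filter (fun x : Fin (n + 1) → Z => x 0 = a ∧ x (Fin.last n) = c),
      ∏ i : Fin n, M (x i.castSucc) (x i.succ) = (M ^ n) a c := by
  intro n
  induction n with
  | zero =>
    intro a c
    rw [Finset.sum_filter, pow_zero]
    rw [Fintype.sum_equiv (Equiv.funUnique (Fin 1) Z)
      (fun x : Fin 1 → Z => if x 0 = a ∧ x (Fin.last 0) = c then
        ∏ i : Fin 0, M (x i.castSucc) (x i.succ) else 0)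
      (fun z : Z => if z = a ∧ z = c then 1 else 0)
      (by intro x; simp [Equiv.funUnique, Fin.last])]
    by_cases h : a = c
    · subst h; simp [Matrix.one_apply]
    · rw [Matrix.one_apply, if_neg h]
      apply Finset.sum_eq_zero
      intro z _
      rw [if_neg]
      rintro ⟨rfl, rfl⟩
      exact h rfl
  | succ n ih =>
    intro a c
    have key : ∀ (y : Fin (n + 1) → Z) (d : Z),
        (if y 0 = a ∧ d = c then
          (∏ i : Fin n, M (y i.castSucc) (y i.succ)) * M (y (Fin.last n)) d else 0)
        = (if (Fin.snoc y d : Fin (n + 2) → Z) 0 = a ∧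
              (Fin.snoc y d : Fin (n + 2) → Z) (Fin.last (n + 1)) = c then
          ∏ i : Fin (n + 1), M ((Fin.snoc y d : Fin (n + 2) → Z) i.castSucc)
            ((Fin.snoc y d : Fin (n + 2) → Z) i.succ) else 0) := by
      intro y d
      have h0 : (Fin.snoc y d : Fin (n + 2) → Z) 0 = y 0 := by
        show (Fin.snoc y d : Fin (n + 2) → Z) (Fin.castSucc 0) = y 0
        rw [Fin.snoc_castSucc]
      have hlast : (Fin.snoc y d : Fin (n + 2) → Z) (Fin.last (n + 1)) = d :=
        Fin.snoc_last _ _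
      have hprod : ∏ i : Fin (n + 1), M ((Fin.snoc y d : Fin (n + 2) → Z) i.castSucc)
            ((Fin.snoc y d : Fin (n + 2) → Z) i.succ)
          = (∏ i : Fin n, M (y i.castSucc) (y i.succ)) * M (y (Fin.last n)) d := by
        rw [Fin.prod_univ_castSucc]
        congr 1
        · refine Finset.prod_congr rfl fun i _ => ?_
          rw [Fin.succ_castSucc, Fin.snoc_castSucc, Fin.snoc_castSucc]
        · rw [Fin.succ_last, Fin.snoc_last, Fin.snoc_castSucc]
      rw [h0, hlast, hprod]
    rw [Finset.sum_filter]
    rw [← Fintype.sum_equiv (Fin.snocEquiv (fun _ : Fin (n + 2) => Z))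
      (fun p : Z × (Fin (n + 1) → Z) => if p.2 0 = a ∧ p.1 = c then
        (∏ i : Fin n, M (p.2 i.castSucc) (p.2 i.succ)) * M (p.2 (Fin.last n)) p.1 else 0)
      (fun x : Fin (n + 2) → Z => if x 0 = a ∧ x (Fin.last (n + 1)) = c then
        ∏ i : Fin (n + 1), M (x i.castSucc) (x i.succ) else 0)
      (fun p => by exact key p.2 p.1)]
    rw [Fintype.sum_prod_type, Finset.sum_comm]
    have step1 : ∀ y : Fin (n + 1) → Z,
        (∑ d : Z, if y 0 = a ∧ d = c then
          (∏ i : Fin n, M (y i.castSucc) (y i.succ)) * M (y (Fin.last n)) d else 0)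
        = if y 0 = a then
          (∏ i : Fin n, M (y i.castSucc) (y i.succ)) * M (y (Fin.last n)) c else 0 := by
      intro y
      by_cases hy : y 0 = a
      · simp [hy]
      · simp [hy]
    rw [Finset.sum_congr rfl (fun y _ => step1 y), ← Finset.sum_filter]
    -- now RHS
    rw [pow_succ, Matrix.mul_apply]
    have step2 : ∀ ee : Z, (M ^ n) a ee * M ee c
        = ∑ y ∈ (Finset.univ.filter (fun y : Fin (n + 1) → Z => y 0 = a)).filter
            (fun y => y (Fin.last n) = ee),
          (∏ i : Fin n, M (y i.castSucc) (y i.succ)) * M (y (Fin.last n)) c := by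
      intro ee
      rw [← ih a ee, Finset.sum_mul, Finset.filter_filter]
      refine Finset.sum_congr rfl fun y hy => ?_
      rw [Finset.mem_filter] at hy
      rw [hy.2.2]
    rw [Finset.sum_congr rfl (fun ee _ => step2 ee)]
    rw [Finset.sum_fiberwise_eq_sum_filter]
    simp

theorem stmt_13 {Z : Type*} [Fintype Z] [Nonempty Z] [DecidableEq Z] (P : Z → Z → ℝ)
    (hP : RowStochastic P) (hirr : IsIrreducibleChain P) (a b : Z) (hab : a ≠ b) :
    ∑' m : ℕ, ∑ x ∈ Finset.univ.filter (fun x : Fin (m + 1 + 1) → Z =>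
        x 0 = a ∧ x (Fin.last (m + 1)) = b ∧
        ∀ i : Fin (m + 1 + 1), i < Fin.last (m + 1) → x i ≠ b),
      pathProb P x = 1 := by
  obtain ⟨hPnn, hProw⟩ := hP
  -- the taboo matrix: kill transitions out of `b`
  set R : Matrix Z Z ℝ := Matrix.of (fun c d => if c = b then 0 else P c d) with hR
  have hRapp : ∀ c d, R c d = if c = b then 0 else P c d := fun c d => rfl
  have hRnn : ∀ c d, 0 ≤ R c d := by
    intro c d; rw [hRapp]; split
    · exact le_refl 0
    · exact hPnn c d
  have hRleP : ∀ c d, R c d ≤ P c d := by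
    intro c d; rw [hRapp]; split
    · exact hPnn c d
    · exact le_refl _
  have hRrow : ∀ c, ∑ d, R c d = if c = b then 0 else 1 := by
    intro c
    by_cases hc : c = b
    · simp [hRapp, hc]
    · rw [if_neg hc, ← hProw c]
      exact Finset.sum_congr rfl fun d _ => by rw [hRapp, if_neg hc]
  have hpownn : ∀ (n : ℕ) (c d : Z), 0 ≤ (R ^ n) c d := by
    intro n
    induction n with
    | zero => intro c d; rw [pow_zero, Matrix.one_apply]; positivity
    | succ n ih =>
      intro c d
      rw [pow_succ, Matrix.mul_apply]
      exact Finset.sum_nonneg fun e _ => mul_nonneg (ih c e) (hRnn e d)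
  have hPpownn : ∀ (n : ℕ) (c d : Z), 0 ≤ (Matrix.of P ^ n) c d := by
    intro n
    induction n with
    | zero => intro c d; rw [pow_zero, Matrix.one_apply]; positivity
    | succ n ih =>
      intro c d
      rw [pow_succ, Matrix.mul_apply]
      exact Finset.sum_nonneg fun e _ => mul_nonneg (ih c e) (hPnn e d)
  have hpowle : ∀ (n : ℕ) (c d : Z), (R ^ n) c d ≤ (Matrix.of P ^ n) c d := by
    intro n
    induction n with
    | zero => intro c d; rw [pow_zero, pow_zero]
    | succ n ih =>
      intro c d
      rw [pow_succ, pow_succ, Matrix.mul_apply, Matrix.mul_apply]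
      refine Finset.sum_le_sum fun e _ => ?_
      exact mul_le_mul (ih c e) (hRleP e d) (hRnn e d) (hPpownn n c e)
  have hProwpow : ∀ (n : ℕ) (c : Z), ∑ d, (Matrix.of P ^ n) c d = 1 := by
    intro n
    induction n with
    | zero => intro c; simp [Matrix.one_apply]
    | succ n ih =>
      intro c
      simp only [pow_succ, Matrix.mul_apply]
      rw [Finset.sum_comm]
      have : ∀ e : Z, ∑ d, (Matrix.of P ^ n) c e * (Matrix.of P) e d
          = (Matrix.of P ^ n) c e := by
        intro e
        rw [← Finset.mul_sum]
        have : ∑ d, (Matrix.of P) e d = 1 := hProw e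
        rw [this, mul_one]
      rw [Finset.sum_congr rfl fun e _ => this e]
      exact ih c
  -- survival probability
  set W : ℕ → Z → ℝ := fun n c => ∑ d ∈ Finset.univ.erase b, (R ^ n) c d with hW
  have hWnn : ∀ n c, 0 ≤ W n c := fun n c =>
    Finset.sum_nonneg fun d _ => hpownn n c d
  have hW0 : W 0 a = 1 := by
    simp only [hW, pow_zero]
    rw [Finset.sum_congr rfl fun d _ => (Matrix.one_apply : (1 : Matrix Z Z ℝ) a d = _)]
    rw [Finset.sum_ite_eq]
    simp [hab]
  have hRbrow : ∀ d, R b d = 0 := fun d => by rw [hRapp, if_pos rfl]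
  have hWb : ∀ n, 1 ≤ n → ∀ d, (R ^ n) b d = 0 := by
    intro n hn d
    obtain ⟨k, rfl⟩ := Nat.exists_eq_add_of_le hn
    rw [pow_add, pow_one, Matrix.mul_apply]
    apply Finset.sum_eq_zero
    intro e _
    rw [hRbrow, zero_mul]
  have hWbzero : ∀ n, 1 ≤ n → W n b = 0 := by
    intro n hn
    exact Finset.sum_eq_zero fun d _ => hWb n hn d
  have hWadd : ∀ n k c, W (n + k) c = ∑ e, (R ^ n) c e * W k e := by
    intro n k c
    simp only [hW, pow_add, Matrix.mul_apply]
    rw [Finset.sum_comm]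
    exact Finset.sum_congr rfl fun e _ => (Finset.mul_sum _ _ _).symm
  -- row sums of R powers
  have hrowsum : ∀ n c, ∑ d, (R ^ (n + 1)) c d = W n c := by
    intro n c
    simp only [pow_succ, Matrix.mul_apply]
    rw [Finset.sum_comm]
    have h1 : ∀ e : Z, ∑ d, (R ^ n) c e * R e d
        = if e = b then 0 else (R ^ n) c e := by
      intro e
      rw [← Finset.mul_sum, hRrow e]
      split <;> simp
    rw [Finset.sum_congr rfl fun e _ => h1 e]
    rw [← Finset.sum_erase_add _ _ (Finset.mem_univ b), if_pos rfl, add_zero]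
    exact Finset.sum_congr rfl fun e he => by
      rw [if_neg (Finset.mem_erase.1 he).1]
  have htel : ∀ n c, (R ^ (n + 1)) c b = W n c - W (n + 1) c := by
    intro n c
    have h1 : W (n + 1) c + (R ^ (n + 1)) c b = W n c := by
      rw [← hrowsum n c, hW]
      exact Finset.sum_erase_add _ _ (Finset.mem_univ b)
    linarith
  have hpartial : ∀ N : ℕ, ∑ m ∈ Finset.range N, (R ^ (m + 1)) a b = 1 - W N a := by
    intro N
    induction N with
    | zero => simp [hW0]
    | succ N ihN =>
      rw [Finset.sum_range_succ, ihN, htel N a]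
      ring
  have hWmono : ∀ c, ∀ n, W (n + 1) c ≤ W n c := by
    intro c n
    have := htel n c
    have h2 := hpownn (n + 1) c b
    linarith
  have hWanti : ∀ c, Antitone fun n => W n c := fun c =>
    antitone_nat_of_succ_le (hWmono c)
  -- choose uniform horizon
  choose msel hmsel using fun c => hirr c b
  set MM : ℕ := Finset.univ.sup msel with hMM
  have hMM1 : 1 ≤ MM := le_trans (hmsel a).1 (Finset.le_sup (Finset.mem_univ a))
  have hWMlt : ∀ c, W MM c < 1 := by
    intro c
    have h1 : W MM c ≤ W (msel c) c :=
      hWanti c (Finset.le_sup (Finset.mem_univ c))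
    have h2 : W (msel c) c ≤ 1 - (Matrix.of P ^ msel c) c b := by
      have h3 : W (msel c) c ≤ ∑ d ∈ Finset.univ.erase b, (Matrix.of P ^ msel c) c d :=
        Finset.sum_le_sum fun d _ => hpowle _ c d
      have h4 : ∑ d ∈ Finset.univ.erase b, (Matrix.of P ^ msel c) c d
          + (Matrix.of P ^ msel c) c b = 1 := by
        rw [Finset.sum_erase_add _ _ (Finset.mem_univ b)]
        exact hProwpow _ c
      linarith
    have h5 := (hmsel c).2
    linarith
  obtain ⟨c0, _, hc0⟩ := Finset.exists_min_image Finset.univ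
    (fun c => 1 - W MM c) Finset.univ_nonempty
  set δ : ℝ := 1 - W MM c0 with hδ
  have hδpos : 0 < δ := by
    have := hWMlt c0; simp only [hδ]; linarith
  have hδle : ∀ c, W MM c ≤ 1 - δ := by
    intro c
    have := hc0 c (Finset.mem_univ c)
    simp only [hδ] at *
    linarith
  have h1δnn : 0 ≤ 1 - δ := by
    have := hWnn MM c0; simp only [hδ]; linarith
  have hcontr : ∀ n, W (n + MM) a ≤ (1 - δ) * W n a := by
    intro n
    rw [hWadd n MM a]
    rw [← Finset.sum_erase_add _ _ (Finset.mem_univ b),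
      hWbzero MM hMM1, mul_zero, add_zero]
    have : ∀ e ∈ Finset.univ.erase b, (R ^ n) a e * W MM e ≤ (R ^ n) a e * (1 - δ) :=
      fun e _ => mul_le_mul_of_nonneg_left (hδle e) (hpownn n a e)
    calc ∑ e ∈ Finset.univ.erase b, (R ^ n) a e * W MM e
        ≤ ∑ e ∈ Finset.univ.erase b, (R ^ n) a e * (1 - δ) := Finset.sum_le_sum this
      _ = (1 - δ) * W n a := by rw [← Finset.sum_mul, mul_comm]
  have hgeom : ∀ k : ℕ, W (k * MM) a ≤ (1 - δ) ^ k := by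
    intro k
    induction k with
    | zero => simp [hW0]
    | succ k ihk =>
      have h1 : (k + 1) * MM = k * MM + MM := by ring
      rw [h1, pow_succ]
      calc W (k * MM + MM) a ≤ (1 - δ) * W (k * MM) a := hcontr (k * MM)
        _ ≤ (1 - δ) * (1 - δ) ^ k := mul_le_mul_of_nonneg_left ihk h1δnn
        _ = (1 - δ) ^ k * (1 - δ) := mul_comm _ _
  have hWlim : Filter.Tendsto (fun n => W n a) Filter.atTop (nhds 0) := by
    rw [Metric.tendsto_atTop]
    intro ε hε
    obtain ⟨k, hk⟩ := exists_pow_lt_of_lt_one hε (by linarith : 1 - δ < 1)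
    refine ⟨k * MM, fun n hn => ?_⟩
    have h1 : W n a ≤ W (k * MM) a := hWanti a hn
    have h2 : W n a < ε := lt_of_le_of_lt (h1.trans (hgeom k)) hk
    have h3 : 0 ≤ W n a := hWnn n a
    rw [Real.dist_eq, sub_zero, abs_of_nonneg h3]
    exact h2
  -- partial sums converge to 1
  have hsumlim : Filter.Tendsto (fun N => ∑ m ∈ Finset.range N, (R ^ (m + 1)) a b)
      Filter.atTop (nhds 1) := by
    simp only [hpartial]
    have : Filter.Tendsto (fun N => 1 - W N a) Filter.atTop (nhds (1 - 0)) :=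
      Filter.Tendsto.const_sub 1 hWlim
    simpa using this
  have hHasSum : HasSum (fun m : ℕ => (R ^ (m + 1)) a b) 1 :=
    (hasSum_iff_tendsto_nat_of_nonneg (fun m => hpownn (m + 1) a b) 1).2 hsumlim
  -- bridge: inner path sums equal matrix entries
  have hbridge : ∀ m : ℕ,
      ∑ x ∈ Finset.univ.filter (fun x : Fin (m + 1 + 1) → Z =>
        x 0 = a ∧ x (Fin.last (m + 1)) = b ∧
        ∀ i : Fin (m + 1 + 1), i < Fin.last (m + 1) → x i ≠ b),
      pathProb P x = (R ^ (m + 1)) a b := by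
    intro m
    rw [← pathSum_pow R (m + 1) a b]
    set F := Finset.univ.filter (fun x : Fin (m + 1 + 1) → Z =>
        x 0 = a ∧ x (Fin.last (m + 1)) = b ∧
        ∀ i : Fin (m + 1 + 1), i < Fin.last (m + 1) → x i ≠ b) with hF
    set G := Finset.univ.filter (fun x : Fin (m + 1 + 1) → Z =>
        x 0 = a ∧ x (Fin.last (m + 1)) = b) with hG
    have hFG : F ⊆ G := by
      intro x hx
      rw [hF, Finset.mem_filter] at hx
      rw [hG, Finset.mem_filter]
      exact ⟨hx.1, hx.2.1, hx.2.2.1⟩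
    have hstep1 : ∀ x ∈ F, pathProb P x
        = ∏ i : Fin (m + 1), R (x i.castSucc) (x i.succ) := by
      intro x hx
      rw [hF, Finset.mem_filter] at hx
      refine Finset.prod_congr rfl fun i _ => ?_
      have hne : x i.castSucc ≠ b := hx.2.2.2 i.castSucc (Fin.castSucc_lt_last i)
      rw [hRapp, if_neg hne]
    have hstep2 : ∀ x ∈ G, x ∉ F →
        ∏ i : Fin (m + 1), R (x i.castSucc) (x i.succ) = 0 := by
      intro x hxG hxF
      rw [hG, Finset.mem_filter] at hxG
      rw [hF, Finset.mem_filter] at hxF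
      push_neg at hxF
      obtain ⟨i, hi, hib⟩ := hxF (Finset.mem_univ x) hxG.2.1 hxG.2.2
      have hine : i ≠ Fin.last (m + 1) := ne_of_lt hi
      obtain ⟨j, rfl⟩ := Fin.exists_castSucc_eq.mpr hine
      refine Finset.prod_eq_zero (Finset.mem_univ j) ?_
      rw [hib, hRbrow]
    calc ∑ x ∈ F, pathProb P x
        = ∑ x ∈ F, ∏ i : Fin (m + 1), R (x i.castSucc) (x i.succ) :=
          Finset.sum_congr rfl hstep1
      _ = ∑ x ∈ G, ∏ i : Fin (m + 1), R (x i.castSucc) (x i.succ) :=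
          Finset.sum_subset hFG hstep2
  rw [tsum_congr hbridge]
  exact hHasSum.tsum_eq
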